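/- arXiv:2109.10804 — 5 statements merged into one kernel-verified Lean document; each statement's English description precedes it below -/
import Mathlib

section
/- Let e: ℝ → ℂ be a nonconstant C² map satisfying e''(x) = ∇W(e(x)) and the equipartition relation ½|e'(x)|² = W(e(x)) for all x ∈ ℝ. Then f(e(x)) ≠ 0 ためall x ∈ ℝ, and consequently e'(x) ≠ 0 for all x ∈ ℝ. -/
open MeasureTheory Complex Filter

section Aux

open Set InnerProductSpace

private lemma gron_right' {ρ ρ' : ℝ → ℝ} {K a b : ℝ} (hd : ∀ x, HasDerivAt ρ (ρ' x) x)
    (hb : ∀ x ∈ Icc a b, ‖ρ' x‖ ≤ K * ‖ρ x‖) (h0 : ρ a = 0) :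
    ∀ x ∈ Icc a b, ρ x = 0 := by
  intro x hx
  have h := norm_le_gronwallBound_of_norm_deriv_right_le (f := ρ) (f' := ρ')
    (δ := 0) (K := K) (ε := 0) (a := a) (b := b)
    (fun y _ => (hd y).continuousAt.continuousWithinAt)
    (fun y _ => (hd y).hasDerivWithinAt)
    (by simp [h0])
    (fun y hy => by simpa using hb y (Ico_subset_Icc_self hy)) x hx
  rw [gronwallBound_ε0_δ0] at h
  exact norm_le_zero_iff.mp h

private lemma gron_left' {ρ ρ' : ℝ → ℝ} {K a b : ℝ} (hd : ∀ x, HasDerivAt ρ (ρ' x) x)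
    (hb : ∀ x ∈ Icc a b, ‖ρ' x‖ ≤ K * ‖ρ x‖) (h0 : ρ b = 0) :
    ∀ x ∈ Icc a b, ρ x = 0 := by
  have hdσ : ∀ t : ℝ, HasDerivAt (fun t => ρ (a + b - t)) (ρ' (a + b - t) * (-1)) t := by
    intro t
    exact (hd (a + b - t)).comp t (((hasDerivAt_id t).const_sub (a + b)))
  intro x hx
  have h := gron_right' (ρ := fun t => ρ (a + b - t)) (ρ' := fun t => ρ' (a + b - t) * (-1))
    (K := K) (a := a) (b := b) hdσ
    (fun t ht => by
      simpa using hb (a + b - t) ⟨by linarith [ht.2], by linarith [ht.1]⟩)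
    (by simpa using h0) (a + b - x) ⟨by linarith [hx.2], by linarith [hx.1]⟩
  simpa [show a + b - (a + b - x) = x by ring] using h

end Aux

/-- `W(z) = |f(z)|²` as a function of two real variables. -/
noncomputable def W (f : ℂ → ℂ) (z : ℂ) : ℝ := ‖f z‖ ^ 2

private lemma hasGradW (f : ℂ → ℂ) (hf : Differentiable ℂ f) (z : ℂ) :
    HasGradientAt (W f) (2 * (starRingEnd ℂ) (deriv f z) * f z) z := by
  rw [hasGradientAt_iff_hasFDerivAt]
  have hfz : HasFDerivAt f
      (((ContinuousLinearMap.id ℂ ℂ).smulRight (deriv f z)).restrictScalars ℝ) z :=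
    ((hf z).hasDerivAt.hasFDerivAt).restrictScalars ℝ
  have hIn := HasFDerivAt.inner ℝ hfz hfz
  have hfun : (W f) = fun w => (inner ℝ (f w) (f w) : ℝ) := by
    funext w
    rw [real_inner_self_eq_norm_sq, W]
  rw [hfun]
  refine HasFDerivAt.congr_fderiv hIn ?_
  apply ContinuousLinearMap.ext
  intro h
  simp [InnerProductSpace.toDual_apply_apply, fderivInnerCLM_apply, Complex.inner, Complex.mul_re,
    Complex.mul_im, Complex.conj_re, Complex.conj_im]
  ring

/-- If `e` is a nonconstant `C²` solution of `e'' = ∇W(e)` satisfying the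
equipartition relation `½|e'|² = W(e)`, then `f(e(x)) ≠ 0` for all `x`, and
consequently `e'(x) ≠ 0` for all `x`. -/
theorem statement5 (f : ℂ → ℂ) (hf : Differentiable ℂ f)
    (e : ℝ → ℂ) (he : ContDiff ℝ 2 e)
    (hnonconst : ∃ x y : ℝ, e x ≠ e y)
    (hODE : ∀ x : ℝ, deriv (deriv e) x = gradient (W f) (e x))
    (heq : ∀ x : ℝ, 2⁻¹ * ‖deriv e x‖ ^ 2 = W f (e x)) :
    ∀ x : ℝ, f (e x) ≠ 0 ∧ deriv e x ≠ 0 := by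
  have hWn : ∀ z : ℂ, W f z = ‖f z‖ ^ 2 := fun z => by rw [W]
  have hd1 : Differentiable ℝ e := he.differentiable two_ne_zero
  have h2 : ContDiff ℝ (1 + 1 : ℕ) e := by exact_mod_cast he
  have hde : ContDiff ℝ 1 (deriv e) := ((contDiff_succ_iff_deriv).mp (by exact_mod_cast h2)).2.2
  have hd2 : Differentiable ℝ (deriv e) := hde.differentiable one_ne_zero
  have hfC : Continuous (deriv f) := (hf.contDiff (n := 1)).continuous_deriv le_rfl
  have hgrad : ∀ z : ℂ, gradient (W f) z = 2 * (starRingEnd ℂ) (deriv f z) * f z :=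
    fun z => (hasGradW f hf z).gradient
  -- the energy function ρ
  set ρ : ℝ → ℝ := fun x => ‖deriv e x‖ ^ 2 with hρdef
  set ρ' : ℝ → ℝ := fun x =>
    (inner ℝ (deriv e x) (deriv (deriv e) x) : ℝ) + (inner ℝ (deriv (deriv e) x) (deriv e x) : ℝ)
    with hρ'def
  have hρ : ∀ x, HasDerivAt ρ (ρ' x) x := by
    intro x
    have h1 : HasDerivAt (deriv e) (deriv (deriv e) x) x := (hd2 x).hasDerivAt
    have h := HasDerivAt.inner ℝ h1 h1
    have hfun : (fun t => (inner ℝ (deriv e t) (deriv e t) : ℝ)) = ρ :=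
      funext fun t => real_inner_self_eq_norm_sq _
    rw [hfun] at h
    exact h
  -- local constancy at zeros of f ∘ e
  have key : ∀ x₀ : ℝ, f (e x₀) = 0 → ∀ y ∈ Set.Icc (x₀ - 1) (x₀ + 1), e y = e x₀ := by
    intro x₀ hx₀ y hy
    obtain ⟨C, hC⟩ := (isCompact_Icc (a := x₀ - 1) (b := x₀ + 1)).exists_bound_of_continuousOn
      ((hfC.comp he.continuous).continuousOn (s := Set.Icc (x₀ - 1) (x₀ + 1)))
    have hbound : ∀ x ∈ Set.Icc (x₀ - 1) (x₀ + 1), ‖ρ' x‖ ≤ (4 * C) * ‖ρ x‖ := by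
      intro x hx
      have hfe : ‖f (e x)‖ ≤ ‖deriv e x‖ := by
        have h := heq x
        rw [hWn] at h
        nlinarith [norm_nonneg (f (e x)), norm_nonneg (deriv e x)]
      have hdd : ‖deriv (deriv e) x‖ = 2 * ‖deriv f (e x)‖ * ‖f (e x)‖ := by
        rw [hODE x, hgrad]
        simp [norm_mul]
      have hCx : ‖deriv f (e x)‖ ≤ C := hC x hx
      have hinner : |ρ' x| ≤ 2 * (‖deriv (deriv e) x‖ * ‖deriv e x‖) := by
        have h1 := abs_real_inner_le_norm (deriv e x) (deriv (deriv e) x)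
        have h2 := abs_real_inner_le_norm (deriv (deriv e) x) (deriv e x)
        calc |ρ' x| ≤ |(inner ℝ (deriv e x) (deriv (deriv e) x) : ℝ)| +
              |(inner ℝ (deriv (deriv e) x) (deriv e x) : ℝ)| := abs_add_le _ _
          _ ≤ 2 * (‖deriv (deriv e) x‖ * ‖deriv e x‖) := by nlinarith
      have hρx : ‖ρ x‖ = ‖deriv e x‖ ^ 2 := by
        simp [hρdef, abs_of_nonneg (sq_nonneg ‖deriv e x‖), Real.norm_eq_abs]
      rw [Real.norm_eq_abs, hρx]
      have hCnn : 0 ≤ C := le_trans (norm_nonneg _) hCx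
      have hkey : ‖deriv f (e x)‖ * ‖f (e x)‖ * ‖deriv e x‖ ≤ C * ‖deriv e x‖ * ‖deriv e x‖ :=
        mul_le_mul_of_nonneg_right (mul_le_mul hCx hfe (norm_nonneg _) hCnn) (norm_nonneg _)
      rw [hdd] at hinner
      nlinarith [hinner, hkey]
    have hρ0 : ρ x₀ = 0 := by
      have h := heq x₀
      rw [hWn, hx₀, norm_zero] at h
      simp only [hρdef]
      nlinarith [h]
    have hzero : ∀ x ∈ Set.Icc (x₀ - 1) (x₀ + 1), ρ x = 0 := by
      intro x hx
      rcases le_or_gt x x₀ with hle | hlt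
      · exact gron_left' (K := 4 * C) (a := x₀ - 1) (b := x₀) hρ
          (fun t ht => hbound t ⟨ht.1, by linarith [ht.2]⟩) hρ0 x ⟨hx.1, hle⟩
      · exact gron_right' (K := 4 * C) (a := x₀) (b := x₀ + 1) hρ
          (fun t ht => hbound t ⟨by linarith [ht.1], ht.2⟩) hρ0 x ⟨hlt.le, hx.2⟩
    -- deriv e = 0 on the interval, so e is constant there
    have hconst : ‖e y - e x₀‖ ≤ 0 * ‖y - x₀‖ := by
      apply Convex.norm_image_sub_le_of_norm_hasDerivWithin_le
        (f := e) (f' := deriv e) (s := Set.Icc (x₀ - 1) (x₀ + 1))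
        (fun x _ => (hd1 x).hasDerivAt.hasDerivWithinAt)
        (fun x hx => by
          have := hzero x hx
          simp only [hρdef] at this
          have : ‖deriv e x‖ = 0 := by nlinarith [norm_nonneg (deriv e x)]
          simp [this])
        (convex_Icc _ _) (by constructor <;> linarith) hy
    rw [zero_mul] at hconst
    have h0 : ‖e y - e x₀‖ = 0 := le_antisymm hconst (norm_nonneg _)
    exact sub_eq_zero.mp (norm_eq_zero.mp h0)
  -- no zero of f along e
  have hno : ∀ x : ℝ, f (e x) ≠ 0 := by
    by_contra h
    push_neg at h
    obtain ⟨x₀, hx₀⟩ := h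
    set S : Set ℝ := {x | f (e x) = 0} with hSdef
    have hSopen : IsOpen S := by
      rw [isOpen_iff_mem_nhds]
      intro x hx
      have hsub : Set.Ioo (x - 1) (x + 1) ⊆ S := by
        intro y hy
        have : e y = e x := key x hx y ⟨hy.1.le, hy.2.le⟩
        simp only [hSdef, Set.mem_setOf_eq, this]
        exact hx
      exact Filter.mem_of_superset (Ioo_mem_nhds (by linarith) (by linarith)) hsub
    have hSclosed : IsClosed S :=
      isClosed_eq (hf.continuous.comp he.continuous) continuous_const
    have := (isClopen_iff.mp ⟨hSclosed, hSopen⟩).resolve_left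
      (Set.nonempty_iff_ne_empty.mp ⟨x₀, hx₀⟩)
    have hall : ∀ x : ℝ, f (e x) = 0 := fun x => by
      have : x ∈ S := this ▸ Set.mem_univ x
      exact this
    have hder0 : ∀ x : ℝ, deriv e x = 0 := by
      intro x
      have h := heq x
      rw [hWn, hall x, norm_zero] at h
      have h2 : ‖deriv e x‖ ^ 2 = 0 := by nlinarith [h]
      exact norm_eq_zero.mp ((pow_eq_zero_iff (by norm_num : (2:ℕ) ≠ 0)).mp h2)
    obtain ⟨x, y, hxy⟩ := hnonconst
    exact hxy (is_const_of_deriv_eq_zero hd1 hder0 x y)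
  intro x
  refine ⟨hno x, fun h => hno x ?_⟩
  have hh := heq x
  rw [h, hWn, norm_zero] at hh
  have h2 : ‖f (e x)‖ ^ 2 = 0 := by nlinarith [hh]
  exact norm_eq_zero.mp ((pow_eq_zero_iff (by norm_num : (2:ℕ) ≠ 0)).mp h2)
end

section
/- Let e: ℝ → ℂ be a C² map satisfying e''(x) = 2 f(e(x))·conj(f'(e(x))), the equipartition relation ½|e'(x)|² = |f(e(x))|², and f(e(x)) ≠ 0 for all x ∈ ℝ. Then there exists a constant m ∈ ℂ with |m| = 1 such that e'(x) = √2 · m · conj(f(e(x))) for all x ∈ ℝ. -/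
open MeasureTheory Complex Filter

/-- If a `C²` map `e` satisfies `e'' = 2 f(e) conj(f'(e))`, the equipartition
relation `½|e'|² = |f(e)|²`, and `f(e(x)) ≠ 0` for all `x`, then there is a
constant `m ∈ ℂ` with `|m| = 1` such that `e' = √2 m conj(f(e))`. -/
theorem statement6 (f : ℂ → ℂ) (hf : Differentiable ℂ f)
    (e : ℝ → ℂ) (he : ContDiff ℝ 2 e)
    (hODE : ∀ x : ℝ, deriv (deriv e) x = 2 * f (e x) * (starRingEnd ℂ) (deriv f (e x)))
    (heq : ∀ x : ℝ, 2⁻¹ * ‖deriv e x‖ ^ 2 = ‖f (e x)‖ ^ 2)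
    (hnz : ∀ x : ℝ, f (e x) ≠ 0) :
    ∃ m : ℂ, ‖m‖ = 1 ∧
      ∀ x : ℝ, deriv e x = (Real.sqrt 2 : ℂ) * m * (starRingEnd ℂ) (f (e x)) := by
  set g : ℝ → ℂ := fun x => deriv e x / (starRingEnd ℂ) (f (e x)) with hg
  have hce : ∀ x, (starRingEnd ℂ) (f (e x)) ≠ 0 := fun x => by simpa using hnz x
  have he' : ∀ x, HasDerivAt e (deriv e x) x := fun x =>
    ((he.differentiable (by norm_num)) x).hasDerivAt
  have he'' : ∀ x : ℝ, HasDerivAt (deriv e) (deriv (deriv e) x) x := fun x => by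
    have h2 : ContDiff ℝ (1+1) e := by norm_num; exact he
    have : Differentiable ℝ (deriv e) :=
      (contDiff_succ_iff_deriv.mp h2).2.2.differentiable (by norm_num)
    exact (this x).hasDerivAt
  -- derivative of f ∘ e
  have hfe : ∀ x, HasDerivAt (fun x => f (e x)) (deriv e x * deriv f (e x)) x := by
    intro x
    have h1 : HasFDerivAt f
        (((1 : ℂ →L[ℂ] ℂ).smulRight (deriv f (e x))).restrictScalars ℝ) (e x) :=
      ((hf (e x)).hasDerivAt.hasFDerivAt).restrictScalars ℝ
    have := h1.comp_hasDerivAt x (he' x)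
    have h3 : HasDerivAt (f ∘ e) (deriv e x * deriv f (e x)) x := by simpa using this
    exact h3
  -- derivative of conj (f ∘ e)
  have hcfe : ∀ x, HasDerivAt (fun x => (starRingEnd ℂ) (f (e x)))
      ((starRingEnd ℂ) (deriv e x * deriv f (e x))) x := fun x => (hfe x).star
  -- key pointwise identity: e' * conj e' = 2 f(e) * conj(f(e))
  have hkey : ∀ x, deriv e x * (starRingEnd ℂ) (deriv e x)
      = 2 * (f (e x) * (starRingEnd ℂ) (f (e x))) := by
    intro x
    rw [Complex.mul_conj, Complex.mul_conj]
    have h := heq x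
    rw [Complex.sq_norm (f (e x))] at h
    have : Complex.normSq (deriv e x) = 2 * Complex.normSq (f (e x)) := by
      have h2 : ‖deriv e x‖ ^ 2 = Complex.normSq (deriv e x) := by
        rw [Complex.sq_norm]
      nlinarith [h]
    push_cast [this]
    ring
  -- g has derivative 0
  have hg' : ∀ x, HasDerivAt g 0 x := by
    intro x
    have hdiv := (he'' x).div (hcfe x) (hce x)
    have hnum : (deriv (deriv e) x * (starRingEnd ℂ) (f (e x)) -
        deriv e x * (starRingEnd ℂ) (deriv e x * deriv f (e x))) /
        ((starRingEnd ℂ) (f (e x))) ^ 2 = 0 := by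
      rw [div_eq_zero_iff]
      left
      rw [hODE x, map_mul]
      have := hkey x
      linear_combination (-(starRingEnd ℂ) (deriv f (e x))) * this
    rw [← hnum]
    exact hdiv
  have hgd : Differentiable ℝ g := fun x => (hg' x).differentiableAt
  have hgc : ∀ x, g x = g 0 := fun x =>
    is_const_of_deriv_eq_zero hgd (fun x => (hg' x).deriv) x 0
  have hs2 : ((Real.sqrt 2 : ℝ) : ℂ) ≠ 0 := by
    norm_cast
    positivity
  have hnorm : ∀ x, ‖deriv e x‖ = Real.sqrt 2 * ‖f (e x)‖ := by
    intro x
    have h0 := heq x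
    have hb : 0 < ‖f (e x)‖ := norm_pos_iff.mpr (hnz x)
    have ha : 0 ≤ ‖deriv e x‖ := norm_nonneg _
    have hs : Real.sqrt 2 ^ 2 = 2 := Real.sq_sqrt (by norm_num)
    have hsp : 0 < Real.sqrt 2 := Real.sqrt_pos.mpr (by norm_num)
    nlinarith [mul_pos hsp hb]
  refine ⟨g 0 / Real.sqrt 2, ?_, ?_⟩
  · rw [norm_div, hg]
    simp only
    rw [norm_div]
    have hcn : ‖(starRingEnd ℂ) (f (e 0))‖ = ‖f (e 0)‖ := by
      simp
    have hsn : ‖((Real.sqrt 2 : ℝ) : ℂ)‖ = Real.sqrt 2 := by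
      simp [Complex.norm_real, Real.sqrt_nonneg]
    rw [hcn, hsn, hnorm 0]
    have hb : 0 < ‖f (e 0)‖ := norm_pos_iff.mpr (hnz 0)
    have hsp : 0 < Real.sqrt 2 := Real.sqrt_pos.mpr (by norm_num)
    field_simp
  · intro x
    have h1 : g x = g 0 := hgc x
    have h2 : g x = deriv e x / (starRingEnd ℂ) (f (e x)) := rfl
    rw [← h1]
    rw [h2]
    field_simp [hce x, hs2]
end

section
/- Let m ∈ ℂ with |m| = 1 and let e: ℝ → ℂ be a C¹ map satisfying e'(x) = √2 · m · conj(f(e(x))) for all x ∈ ℝ. Then for every compactly supported C¹ function h: ℝ → ℂ, one has the integration-by-parts identity −√2 · Re( conj(m) · ∫_ℝ f'(e(x)) · (h(x)²)' dx ) = 2 · Re( ∫_ℝ f''(e(x)) · conj(f(e(x))) · h(x)² dx ). -/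
open MeasureTheory Complex Filter ContDiff

/-- Integration by parts: if `|m| = 1` and `e' = √2 m conj(f(e))`, then for every
compactly supported `C¹` function `h : ℝ → ℂ`,
`-√2 Re(conj m ∫ f'(e) (h²)') = 2 Re(∫ f''(e) conj(f(e)) h²)`. -/
theorem statement7 (f : ℂ → ℂ) (hf : Differentiable ℂ f)
    (m : ℂ) (hm : ‖m‖ = 1) (e : ℝ → ℂ)
    (he : ∀ x : ℝ, HasDerivAt e ((Real.sqrt 2 : ℂ) * m * (starRingEnd ℂ) (f (e x))) x)
    (h : ℝ → ℂ) (hh : ContDiff ℝ 1 h) (hsupp : HasCompactSupport h) :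
    -Real.sqrt 2 * ((starRingEnd ℂ) m
        * ∫ x : ℝ, deriv f (e x) * deriv (fun y => h y ^ 2) x).re
      = 2 * (∫ x : ℝ, deriv (deriv f) (e x) * (starRingEnd ℂ) (f (e x)) * h x ^ 2).re := by
  -- basic facts
  have hfC : ContDiff ℂ ∞ f := hf.contDiff
  have hf' : Differentiable ℂ (deriv f) := (contDiff_infty_iff_deriv.mp hfC).2.differentiable (by simp)
  have hf'' : Continuous (deriv (deriv f)) :=
    (contDiff_infty_iff_deriv.mp (contDiff_infty_iff_deriv.mp hfC).2).2.continuous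
  have heC : Continuous e := continuous_iff_continuousAt.mpr fun x => (he x).continuousAt
  -- set u, v
  set u : ℝ → ℂ := fun x => deriv f (e x) with hu_def
  set v : ℝ → ℂ := fun x => h x ^ 2 with hv_def
  set u' : ℝ → ℂ := fun x =>
    ((Real.sqrt 2 : ℂ) * m * (starRingEnd ℂ) (f (e x))) * deriv (deriv f) (e x) with hu'_def
  set v' : ℝ → ℂ := fun x => deriv v x with hv'_def
  have hvC : ContDiff ℝ 1 v := hh.pow 2
  have hvdiff : Differentiable ℝ v := hvC.differentiable one_ne_zero
  have hv : ∀ x, HasDerivAt v (v' x) x := fun x => (hvdiff x).hasDerivAt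
  have hu : ∀ x, HasDerivAt u (u' x) x := by
    intro x
    have h1 : HasFDerivAt (deriv f)
        (ContinuousLinearMap.restrictScalars ℝ
          (ContinuousLinearMap.smulRight (1 : ℂ →L[ℂ] ℂ) (deriv (deriv f) (e x)))) (e x) :=
      ((hf' (e x)).hasDerivAt.hasFDerivAt).restrictScalars ℝ
    have h2 := h1.comp_hasDerivAt x (he x)
    simpa [Function.comp_def, hu'_def, mul_comm, mul_left_comm, mul_assoc] using h2
  -- compact supports
  have hvsupp : HasCompactSupport v := by
    rw [hv_def]; simp_rw [sq]; exact hsupp.mul_right (f' := h)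
  have hv'supp : HasCompactSupport v' := hvsupp.deriv
  have hv'C : Continuous v' := hvC.continuous_deriv le_rfl
  have huC : Continuous u := (hf'.continuous).comp heC
  have hu'C : Continuous u' := by
    apply Continuous.mul
    · exact continuous_const.mul ((Complex.continuous_conj.comp hf.continuous).comp heC)
    · exact hf''.comp heC
  have hint1 : Integrable (u * v') := by
    apply Continuous.integrable_of_hasCompactSupport (huC.mul hv'C)
    exact hv'supp.mul_left
  have hint2 : Integrable (u' * v) := by
    apply Continuous.integrable_of_hasCompactSupport (hu'C.mul (hvC.continuous))
    exact hvsupp.mul_left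
  have hint3 : Integrable (u * v) := by
    apply Continuous.integrable_of_hasCompactSupport (huC.mul (hvC.continuous))
    exact hvsupp.mul_left
  have key : ∫ x : ℝ, u x * v' x = - ∫ x : ℝ, u' x * v x :=
    integral_mul_deriv_eq_deriv_mul_of_integrable (fun x _ => hu x) (fun x _ => hv x) hint1 hint2 hint3
  have hmm : (starRingEnd ℂ) m * m = 1 := by
    have hn : Complex.normSq m = 1 := by
      rw [← Complex.sq_norm, hm]; norm_num
    rw [mul_comm, Complex.mul_conj, hn, Complex.ofReal_one]
  have hsplit : ∫ x : ℝ, u' x * v x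
      = (Real.sqrt 2 : ℂ) * m
        * ∫ x : ℝ, deriv (deriv f) (e x) * (starRingEnd ℂ) (f (e x)) * h x ^ 2 := by
    rw [← integral_const_mul]
    congr 1
    ext x
    simp only [hu'_def, hv_def]
    ring
  calc -Real.sqrt 2 * ((starRingEnd ℂ) m * ∫ x : ℝ, u x * v' x).re
      = -Real.sqrt 2 * ((starRingEnd ℂ) m * -((Real.sqrt 2 : ℂ) * m
          * ∫ x : ℝ, deriv (deriv f) (e x) * (starRingEnd ℂ) (f (e x)) * h x ^ 2)).re := by
        rw [key, hsplit]
    _ = 2 * (∫ x : ℝ, deriv (deriv f) (e x) * (starRingEnd ℂ) (f (e x)) * h x ^ 2).re := by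
        have : (starRingEnd ℂ) m * -((Real.sqrt 2 : ℂ) * m
            * ∫ x : ℝ, deriv (deriv f) (e x) * (starRingEnd ℂ) (f (e x)) * h x ^ 2)
            = -((Real.sqrt 2 : ℂ)
            * ∫ x : ℝ, deriv (deriv f) (e x) * (starRingEnd ℂ) (f (e x)) * h x ^ 2) := by
          have step : (starRingEnd ℂ) m * -((Real.sqrt 2 : ℂ) * m
              * ∫ x : ℝ, deriv (deriv f) (e x) * (starRingEnd ℂ) (f (e x)) * h x ^ 2)
              = ((starRingEnd ℂ) m * m) * -((Real.sqrt 2 : ℂ)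
              * ∫ x : ℝ, deriv (deriv f) (e x) * (starRingEnd ℂ) (f (e x)) * h x ^ 2) := by ring
          rw [step, hmm, one_mul]
        rw [this, Complex.neg_re, Complex.re_ofReal_mul]
        have h2 : Real.sqrt 2 * Real.sqrt 2 = 2 := Real.mul_self_sqrt (by norm_num)
        rw [neg_mul_neg, ← mul_assoc, h2]
end

section
/- Let m ∈ ℂ with |m| = 1 and let e: ℝ → ℂ be a C¹ map satisfying e'(x) = √2 · m · conj(f(e(x))) for all x ∈ ℝ. Then for every compactly supported C¹ function h: ℝ → ℂ, ∫_ℝ ( |h'(x)|² + D²W(e(x))(h(x), h(x)) ) dx = ∫_ℝ | h'(x) − √2 · m · conj( f'(e(x)) · h(x) ) |² dx. -/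
open MeasureTheory Complex Filter

noncomputable def QL : ℂ →L[ℝ] (ℂ →L[ℝ] ℝ) :=
  ((ContinuousLinearMap.compL ℝ ℂ ℂ ℝ) Complex.reCLM).comp
    ((2:ℝ) • (ContinuousLinearMap.mul ℝ ℂ))

@[simp] lemma QL_apply (w u : ℂ) : QL w u = 2 * (w * u).re := by
  simp [QL, ContinuousLinearMap.smul_apply]

lemma integral_deriv_zero {E : Type*} [NormedAddCommGroup E] [NormedSpace ℝ E] [CompleteSpace E]
    (g : ℝ → E) (hg : ContDiff ℝ 1 g) (hs : HasCompactSupport g) :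
    ∫ x : ℝ, deriv g x = 0 := by
  have hd : HasCompactSupport (deriv g) := hs.deriv
  have hc : Continuous (deriv g) := hg.continuous_deriv le_rfl
  have hint : Integrable (deriv g) := hc.integrable_of_hasCompactSupport hd
  have h2 := intervalIntegral.integral_Iic_add_Ioi (b := (0:ℝ))
    hint.integrableOn hint.integrableOn
  rw [← h2, hs.integral_Iic_deriv_eq hg 0, hs.integral_Ioi_deriv_eq hg 0]
  abel

lemma nsq (z : ℂ) : ‖z‖ ^ 2 = ((starRingEnd ℂ) z * z).re := by
  rw [← Complex.normSq_eq_conj_mul_self, Complex.ofReal_re, Complex.normSq_eq_norm_sq]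

lemma hasFDerivAt_W (f : ℂ → ℂ) (hf : Differentiable ℂ f) (z : ℂ) :
    HasFDerivAt (W f) (QL ((starRingEnd ℂ) (f z) * deriv f z)) z := by
  have hW : W f = fun w => ‖f w‖ ^ 2 := by
    funext w; simp [W]
  have hfd : HasFDerivAt f ((fderiv ℂ f z).restrictScalars ℝ) z :=
    ((hf z).hasFDerivAt).restrictScalars ℝ
  have h2 := hfd.norm_sq
  rw [hW]
  refine h2.congr_fderiv ?_
  ext u
  simp only [QL_apply, ContinuousLinearMap.smul_apply, ContinuousLinearMap.coe_comp',
    Function.comp_apply, ContinuousLinearMap.coe_restrictScalars', innerSL_apply_apply,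
    Complex.inner, fderiv_eq_smul_deriv, smul_eq_mul]
  ring_nf

lemma fderiv_W (f : ℂ → ℂ) (hf : Differentiable ℂ f) :
    fderiv ℝ (W f) = fun z => QL ((starRingEnd ℂ) (f z) * deriv f z) :=
  funext fun z => (hasFDerivAt_W f hf z).fderiv

lemma differentiable_deriv (f : ℂ → ℂ) (hf : Differentiable ℂ f) :
    Differentiable ℂ (deriv f) := by
  have h1 : Differentiable ℂ (fderiv ℂ f) :=
    fun z => ((hf.analyticAt z).fderiv).differentiableAt
  have h2 : deriv f = fun z => fderiv ℂ f z 1 := rfl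
  rw [h2]
  exact (ContinuousLinearMap.apply ℂ ℂ (1:ℂ)).differentiable.comp h1

lemma second_deriv_W (f : ℂ → ℂ) (hf : Differentiable ℂ f) (z u : ℂ) :
    fderiv ℝ (fderiv ℝ (W f)) z u u
      = (2 * ((starRingEnd ℂ) (deriv f z * u) * (deriv f z * u))
          + 2 * ((starRingEnd ℂ) (f z) * deriv (deriv f) z * u ^ 2)).re := by
  have hdf : Differentiable ℂ (deriv f) := differentiable_deriv f hf
  have hfz : HasFDerivAt f ((fderiv ℂ f z).restrictScalars ℝ) z :=
    ((hf z).hasFDerivAt).restrictScalars ℝ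
  have hdfz : HasFDerivAt (deriv f) ((fderiv ℂ (deriv f) z).restrictScalars ℝ) z :=
    ((hdf z).hasFDerivAt).restrictScalars ℝ
  have hcj : HasFDerivAt (fun w => (starRingEnd ℂ) (f w))
      (((Complex.conjCLE : ℂ ≃L[ℝ] ℂ) : ℂ →L[ℝ] ℂ).comp
        ((fderiv ℂ f z).restrictScalars ℝ)) z :=
    (((Complex.conjCLE : ℂ ≃L[ℝ] ℂ) : ℂ →L[ℝ] ℂ).hasFDerivAt).comp z hfz
  have hP := hcj.mul hdfz
  have hQ : HasFDerivAt (fun z => QL ((starRingEnd ℂ) (f z) * deriv f z))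
      (QL.comp ((starRingEnd ℂ) (f z) • ContinuousLinearMap.restrictScalars ℝ (fderiv ℂ (deriv f) z) +
        deriv f z • ((Complex.conjCLE : ℂ ≃L[ℝ] ℂ) : ℂ →L[ℝ] ℂ).comp
          (ContinuousLinearMap.restrictScalars ℝ (fderiv ℂ f z)))) z :=
    (QL.hasFDerivAt).comp z hP
  rw [fderiv_W f hf, hQ.fderiv]
  simp only [ContinuousLinearMap.coe_comp', Function.comp_apply,
    ContinuousLinearMap.add_apply, ContinuousLinearMap.coe_smul', Pi.smul_apply,
    ContinuousLinearMap.coe_restrictScalars', fderiv_eq_smul_deriv, smul_eq_mul,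
    QL_apply, ContinuousLinearEquiv.coe_coe, Complex.conjCLE_apply]
  simp [Complex.mul_re, Complex.mul_im, Complex.add_re, Complex.add_im, pow_two]
  ring

/-- If `|m| = 1` and `e' = √2 m conj(f(e))`, then for every compactly supported `C¹`
function `h : ℝ → ℂ`,
`∫ (|h'|² + D²W(e)(h,h)) = ∫ |h' - √2 m conj(f'(e) h)|²`,
where `D²W(z)` is the second real Fréchet derivative of `W` at `z`. -/
theorem statement8 (f : ℂ → ℂ) (hf : Differentiable ℂ f)
    (m : ℂ) (hm : ‖m‖ = 1) (e : ℝ → ℂ)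
    (he : ∀ x : ℝ, HasDerivAt e ((Real.sqrt 2 : ℂ) * m * (starRingEnd ℂ) (f (e x))) x)
    (h : ℝ → ℂ) (hh : ContDiff ℝ 1 h) (hsupp : HasCompactSupport h) :
    (∫ x : ℝ, (‖deriv h x‖ ^ 2 + fderiv ℝ (fderiv ℝ (W f)) (e x) (h x) (h x)))
      = ∫ x : ℝ, ‖deriv h x
          - (Real.sqrt 2 : ℂ) * m * (starRingEnd ℂ) (deriv f (e x) * h x)‖ ^ 2 := by
  have hdf : Differentiable ℂ (deriv f) := differentiable_deriv f hf
  have hddf : Differentiable ℂ (deriv (deriv f)) := differentiable_deriv _ hdf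
  set s : ℂ := (Real.sqrt 2 : ℂ) with hs_def
  have hs : s * s = 2 := by
    rw [hs_def, ← Complex.ofReal_mul, Real.mul_self_sqrt (by norm_num)]
    norm_num
  have hmc : (starRingEnd ℂ) m * m = 1 := by
    rw [← Complex.normSq_eq_conj_mul_self, ← Complex.sq_norm, hm]
    norm_num
  have hhd : ∀ x, HasDerivAt h (deriv h x) x :=
    fun x => ((hh.differentiable one_ne_zero) x).hasDerivAt
  have hec : Continuous e := continuous_iff_continuousAt.mpr fun x => (he x).continuousAt
  have hstar : Continuous fun z : ℂ => (starRingEnd ℂ) z := continuous_star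
  have hs2 : ((Real.sqrt 2 : ℝ) : ℂ) * ((Real.sqrt 2 : ℝ) : ℂ) = 2 := by
    rw [← Complex.ofReal_mul, Real.mul_self_sqrt (by norm_num)]; norm_num
  -- the auxiliary function g and its derivative
  set g : ℝ → ℂ := fun x => (starRingEnd ℂ) m * (deriv f (e x) * (h x * h x)) with hg_def
  set D : ℝ → ℂ := fun x => (starRingEnd ℂ) m *
      ((deriv (deriv f) (e x) * (s * m * (starRingEnd ℂ) (f (e x)))) * (h x * h x)
        + deriv f (e x) * (2 * h x * deriv h x)) with hD_def
  have hA : ∀ x, HasDerivAt (fun y => deriv f (e y))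
      (deriv (deriv f) (e x) * (s * m * (starRingEnd ℂ) (f (e x)))) x := by
    intro x
    have h1 : HasDerivAt (deriv f) (deriv (deriv f) (e x)) (e x) :=
      (hdf (e x)).hasDerivAt
    have h2 := (h1.hasFDerivAt.restrictScalars ℝ).comp_hasDerivAt x (he x)
    simpa [mul_comm, Function.comp_def] using h2
  have hg' : ∀ x, HasDerivAt g (D x) x := by
    intro x
    have h3 : HasDerivAt (fun y => h y * h y) (deriv h x * h x + h x * deriv h x) x :=
      (hhd x).mul (hhd x)
    have h4 := ((hA x).mul h3).const_mul ((starRingEnd ℂ) m)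
    rw [hD_def]
    refine h4.congr_deriv ?_
    push_cast
    ring
  -- real-valued antiderivative
  set G : ℝ → ℝ := fun x => Real.sqrt 2 * (g x).re with hG_def
  have hG' : ∀ x, HasDerivAt G (Real.sqrt 2 * (D x).re) x := by
    intro x
    have h5 : HasDerivAt (fun y => (g y).re) ((D x).re) x :=
      (Complex.reCLM.hasFDerivAt.comp_hasDerivAt x (hg' x))
    exact h5.const_mul _
  -- pointwise identity
  have key : ∀ x : ℝ, ‖deriv h x‖ ^ 2 + fderiv ℝ (fderiv ℝ (W f)) (e x) (h x) (h x)
      = ‖deriv h x - s * m * (starRingEnd ℂ) (deriv f (e x) * h x)‖ ^ 2 + deriv G x := by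
    intro x
    rw [(hG' x).deriv, second_deriv_W f hf, nsq, nsq]
    have hr : Real.sqrt 2 * (D x).re = (s * D x).re := by
      rw [hs_def]
      simp [Complex.mul_re]
    rw [hr, ← Complex.add_re, ← Complex.add_re]
    set u := h x
    set v := deriv h x
    set F := f (e x)
    set A := deriv f (e x)
    set B := deriv (deriv f) (e x)
    have hT : (starRingEnd ℂ) (v - s * m * (starRingEnd ℂ) (A * u)) *
            (v - s * m * (starRingEnd ℂ) (A * u)) + s * D x
        = ((starRingEnd ℂ) v * v +
            (2 * ((starRingEnd ℂ) (A * u) * (A * u)) + 2 * ((starRingEnd ℂ) F * B * u ^ 2)))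
          + (s * (starRingEnd ℂ) m * A * u * v)
          - (starRingEnd ℂ) (s * (starRingEnd ℂ) m * A * u * v) := by
      simp only [hD_def, hs_def, map_mul, map_sub, map_pow, Complex.conj_conj,
        Complex.conj_ofReal]
      linear_combination ((starRingEnd ℂ) m * m *
          ((starRingEnd ℂ) A * A * (starRingEnd ℂ) u * u + B * (starRingEnd ℂ) F * u ^ 2)) * hs2
        + (2 * ((starRingEnd ℂ) A * A * (starRingEnd ℂ) u * u + B * (starRingEnd ℂ) F * u ^ 2)) * hmc
    rw [hT]
    simp only [Complex.add_re, Complex.sub_re, map_mul, Complex.conj_conj, Complex.mul_re,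
      Complex.mul_im, Complex.conj_re, Complex.conj_im]
    ring
  -- integrability
  have hcdh : Continuous (deriv h) := hh.continuous_deriv le_rfl
  have hK : IsCompact (tsupport h ∪ tsupport (deriv h)) := hsupp.union hsupp.deriv
  have hR : Integrable (fun x => ‖deriv h x - s * m * (starRingEnd ℂ) (deriv f (e x) * h x)‖ ^ 2) := by
    apply Continuous.integrable_of_hasCompactSupport
    · exact ((hcdh.sub (continuous_const.mul
        (hstar.comp ((hdf.continuous.comp hec).mul hh.continuous)))).norm).pow 2
    · apply HasCompactSupport.intro hK
      intro x hx
      simp only [Set.mem_union, not_or] at hx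
      rw [image_eq_zero_of_notMem_tsupport hx.1, image_eq_zero_of_notMem_tsupport hx.2]
      simp
  -- G is C¹ with compact support
  have hce : ContDiff ℝ 1 e := by
    rw [contDiff_one_iff_deriv]
    refine ⟨fun x => (he x).differentiableAt, ?_⟩
    have : deriv e = fun x => s * m * (starRingEnd ℂ) (f (e x)) := funext fun x => (he x).deriv
    rw [this]
    exact continuous_const.mul (hstar.comp (hf.continuous.comp hec))
  have hg1 : ContDiff ℝ 1 g := by
    apply ContDiff.mul contDiff_const
    exact (((hdf.contDiff (n := 1)).restrict_scalars ℝ).comp hce).mul (hh.mul hh)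
  have hG1 : ContDiff ℝ 1 G := contDiff_const.mul (Complex.reCLM.contDiff.comp hg1)
  have hGs : HasCompactSupport G := by
    apply HasCompactSupport.intro hsupp
    intro x hx
    rw [hG_def, hg_def]
    simp [image_eq_zero_of_notMem_tsupport hx]
  have hDG : Integrable (deriv G) :=
    (hG1.continuous_deriv le_rfl).integrable_of_hasCompactSupport hGs.deriv
  calc (∫ x : ℝ, (‖deriv h x‖ ^ 2 + fderiv ℝ (fderiv ℝ (W f)) (e x) (h x) (h x)))
      = ∫ x : ℝ, (‖deriv h x - s * m * (starRingEnd ℂ) (deriv f (e x) * h x)‖ ^ 2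
          + deriv G x) := by
        congr 1; funext x; exact key x
    _ = (∫ x : ℝ, ‖deriv h x - s * m * (starRingEnd ℂ) (deriv f (e x) * h x)‖ ^ 2)
          + ∫ x : ℝ, deriv G x := integral_add hR hDG
    _ = ∫ x : ℝ, ‖deriv h x - s * m * (starRingEnd ℂ) (deriv f (e x) * h x)‖ ^ 2 := by
        rw [integral_deriv_zero G hG1 hGs, add_zero]
end

section
/- Let c: ℝ → ℂ be continuous and let u, v: ℝ → ℂ be differentiable maps satisfying u'(x) = c(x)·conj(u(x)) and v'(x) = c(x)·conj(v(x)) for all x ∈ ℝ. Assume u(x) ≠ 0 for all x ∈ ℝ and that Im( conj(u(x₀)) · v(x₀) ) = 0 at some point x₀ ∈ ℝ. Then there exists a constant λ ∈ ℝ such that v(x) = λ·u(x) for all x ∈ ℝ. -/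
open MeasureTheory Complex Filter

/-- If `u, v : ℝ → ℂ` solve the antilinear ODE `w' = c(x) conj w` with `c`
continuous, `u` never vanishes, and the Wronskian `Im(conj(u) v)` vanishes at some
point `x₀`, then `v = λ u` for a real constant `λ`. -/
theorem statement11 (c : ℝ → ℂ) (hc : Continuous c) (u v : ℝ → ℂ)
    (hu : ∀ x : ℝ, HasDerivAt u (c x * (starRingEnd ℂ) (u x)) x)
    (hv : ∀ x : ℝ, HasDerivAt v (c x * (starRingEnd ℂ) (v x)) x)
    (hu0 : ∀ x : ℝ, u x ≠ 0)
    (x₀ : ℝ) (hW : ((starRingEnd ℂ) (u x₀) * v x₀).im = 0) :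
    ∃ lam : ℝ, ∀ x : ℝ, v x = (lam : ℂ) * u x := by
  -- Step 1: the Wronskian vanishes everywhere
  have hW' : ∀ x : ℝ, ((starRingEnd ℂ) (u x) * v x).im = 0 := by
    have hder : ∀ x : ℝ, HasDerivAt (fun y => ((starRingEnd ℂ) (u y) * v y).im) 0 x := by
      intro x
      have h1 : HasDerivAt (fun y => (starRingEnd ℂ) (u y))
          ((starRingEnd ℂ) (c x * (starRingEnd ℂ) (u x))) x := (hu x).star
      have h2 : HasDerivAt (fun y => (starRingEnd ℂ) (u y) * v y)
          ((starRingEnd ℂ) (c x * (starRingEnd ℂ) (u x)) * v x +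
            (starRingEnd ℂ) (u x) * (c x * (starRingEnd ℂ) (v x))) x := h1.mul (hv x)
      have h3 := (Complex.imCLM.hasFDerivAt.comp_hasDerivAt x h2)
      convert h3 using 1
      case e'_5 => rfl
      case e'_8 => rfl
      case e'_4 => rfl
      simp [Complex.mul_im, Complex.mul_re]
      ring
    have hconst : ∀ x : ℝ, (fun y => ((starRingEnd ℂ) (u y) * v y).im) x
        = (fun y => ((starRingEnd ℂ) (u y) * v y).im) x₀ :=
      fun x => is_const_of_deriv_eq_zero
        (fun y => (hder y).differentiableAt) (fun y => (hder y).deriv) x x₀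
    intro x
    simpa [hW] using hconst x
  -- Step 2: v/u is constant
  have hder2 : ∀ x : ℝ, HasDerivAt (fun y => v y / u y) 0 x := by
    intro x
    have h := (hv x).div (hu x) (hu0 x)
    have key : u x * (starRingEnd ℂ) (v x) = (starRingEnd ℂ) (u x) * v x := by
      have h1 : (starRingEnd ℂ) ((starRingEnd ℂ) (u x) * v x)
          = (starRingEnd ℂ) (u x) * v x := Complex.conj_eq_iff_im.mpr (hW' x)
      calc u x * (starRingEnd ℂ) (v x)
          = (starRingEnd ℂ) ((starRingEnd ℂ) (u x) * v x) := by
            simp [map_mul, mul_comm]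
        _ = (starRingEnd ℂ) (u x) * v x := h1
    have hnum : c x * (starRingEnd ℂ) (v x) * u x - v x * (c x * (starRingEnd ℂ) (u x)) = 0 := by
      linear_combination c x * key
    have : (c x * (starRingEnd ℂ) (v x) * u x - v x * (c x * (starRingEnd ℂ) (u x)))
        / u x ^ 2 = 0 := by rw [hnum]; simp
    rw [this] at h
    exact h
  have hconst2 : ∀ x : ℝ, v x / u x = v x₀ / u x₀ :=
    fun x => is_const_of_deriv_eq_zero
      (fun y => (hder2 y).differentiableAt) (fun y => (hder2 y).deriv) x x₀
  set q : ℂ := v x₀ / u x₀ with hq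
  have hvq : ∀ x : ℝ, v x = q * u x := by
    intro x
    have := (div_eq_iff (hu0 x)).mp (hconst2 x)
    rw [this]
  have hqim : q.im = 0 := by
    have h0 := hW' x₀
    rw [hvq x₀] at h0
    have heq : ((starRingEnd ℂ) (u x₀) * (q * u x₀)).im = q.im * Complex.normSq (u x₀) := by
      simp [Complex.mul_im, Complex.mul_re, Complex.normSq_apply]
      ring
    rw [heq] at h0
    have hns : Complex.normSq (u x₀) ≠ 0 := (Complex.normSq_pos.mpr (hu0 x₀)).ne'
    exact (mul_eq_zero.mp h0).resolve_right hns
  refine ⟨q.re, fun x => ?_⟩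
  rw [hvq x]
  congr 1
  simp [Complex.ext_iff, hqim]
end
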